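/- Let t ↦ (x_t, y_t) be the unique solution of the ODE ż = B(z) on its maximal forward interval [0, 𝒯), with initial condition (x∘, y∘) ∈ S. Set h∘ = H(x∘, y∘), ȳ = √(2(h∘+1)), and let x̄ be the unique point of (x_∞, ∞) with P(x̄) = h∘ + 1. Then (x_t, y_t) ∈ (0, x̄] × [-ȳ, ȳ] for all t ∈ [0, 𝒯). -/

import Mathlib

open Real Set

/-- The optimal-velocity function `V(x) = tanh(x-2) - tanh(-2)`. -/
noncomputable def V (x : ℝ) : ℝ := Real.tanh (x - 2) - Real.tanh (-2)

/-- Inverse hyperbolic tangent. -/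
noncomputable def artanh (v : ℝ) : ℝ := (1 / 2) * Real.log ((1 + v) / (1 - v))

/-- The equilibrium following distance `x_∞ = d (2 + artanh(v∘ + tanh(-2)))`. -/
noncomputable def xInf (d v₀ : ℝ) : ℝ := d * (2 + _root_.artanh (v₀ + Real.tanh (-2)))

/-- The potential `P(x) = α ∫_{x_∞}^x ( V(s/d) - v∘ ) ds`. -/
noncomputable def P (α d v₀ : ℝ) (x : ℝ) : ℝ :=
  α * ∫ s in (xInf d v₀)..x, (V (s / d) - v₀)

/-- The Hamiltonian `H(x,y) = y²/2 + P(x)`. -/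
noncomputable def H (α d v₀ : ℝ) (x y : ℝ) : ℝ := y ^ 2 / 2 + P α d v₀ x

/-- `IsSol α β d v₀ x y T` says that `t ↦ (x t, y t)` solves the ODE `ż = B(z)` on the
forward time interval `[0, T)`, staying in the state space `S = (0,∞) × ℝ`. -/
def IsSol (α β d v₀ : ℝ) (x y : ℝ → ℝ) (T : EReal) : Prop :=
  ∀ t : ℝ, 0 ≤ t → (t : EReal) < T →
    0 < x t ∧ HasDerivAt x (y t) t ∧
      HasDerivAt y (-α * (V (x t / d) - v₀ + y t) - β * y t / (x t) ^ 2) t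

/-- `[0, T)` is the maximal forward interval of definition. -/
def IsMaximal (α β d v₀ : ℝ) (x y : ℝ → ℝ) (T : EReal) : Prop :=
  ∀ (T' : EReal) (x' y' : ℝ → ℝ), T < T' → IsSol α β d v₀ x' y' T' →
    x' 0 = x 0 → y' 0 = y 0 → False

/- ### Auxiliary lemmas -/

lemma tanh_formula (x : ℝ) : Real.tanh x = 1 - 2 / (Real.exp (2 * x) + 1) := by
  rw [Real.tanh_eq_sinh_div_cosh, Real.sinh_eq, Real.cosh_eq]
  have h1 : Real.exp x > 0 := Real.exp_pos x
  have h2 : Real.exp (-x) = (Real.exp x)⁻¹ := by rw [Real.exp_neg]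
  have h3 : Real.exp (2 * x) = Real.exp x ^ 2 := by
    rw [two_mul, Real.exp_add]; ring
  rw [h2, h3]
  have h4 : Real.exp x ^ 2 + 1 > 0 := by positivity
  have h5 : Real.exp x + (Real.exp x)⁻¹ > 0 := by positivity
  field_simp
  ring

lemma tanh_strictMono : StrictMono Real.tanh := by
  intro a b hab
  rw [tanh_formula, tanh_formula]
  have h1 : Real.exp (2 * a) < Real.exp (2 * b) := Real.exp_lt_exp.2 (by linarith)
  have h2 : (0:ℝ) < Real.exp (2 * a) + 1 := by positivity
  have : 2 / (Real.exp (2 * b) + 1) < 2 / (Real.exp (2 * a) + 1) := by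
    apply div_lt_div_of_pos_left (by norm_num) h2 (by linarith)
  linarith

lemma tanh_mem (x : ℝ) : Real.tanh x ∈ Set.Ioo (-1 : ℝ) 1 := by
  rw [tanh_formula]
  have h1 : (0:ℝ) < Real.exp (2 * x) := Real.exp_pos _
  have h2 : (0:ℝ) < Real.exp (2 * x) + 1 := by positivity
  constructor
  · have : 2 / (Real.exp (2 * x) + 1) < 2 := by
      rw [div_lt_iff₀ h2]; nlinarith
    linarith
  · have : 0 < 2 / (Real.exp (2 * x) + 1) := by positivity
    linarith

lemma tanh_artanh {v : ℝ} (h1 : -1 < v) (h2 : v < 1) : Real.tanh (_root_.artanh v) = v := by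
  have hv1 : (0:ℝ) < 1 + v := by linarith
  have hv2 : (0:ℝ) < 1 - v := by linarith
  have hpos : (0:ℝ) < (1 + v) / (1 - v) := by positivity
  have hexp : Real.exp (2 * _root_.artanh v) = (1 + v) / (1 - v) := by
    rw [_root_.artanh]
    rw [show 2 * (1 / 2 * Real.log ((1 + v) / (1 - v))) = Real.log ((1+v)/(1-v)) by ring]
    exact Real.exp_log hpos
  rw [tanh_formula, hexp]
  field_simp
  ring

lemma continuous_tanh' : Continuous Real.tanh := by
  have : Real.tanh = fun x => Real.sinh x / Real.cosh x :=
    funext fun x => Real.tanh_eq_sinh_div_cosh x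
  rw [this]
  exact Real.continuous_sinh.div Real.continuous_cosh fun x => (Real.cosh_pos x).ne'

section Pot

variable {α β d v₀ : ℝ} (hα : 0 < α) (hd : 0 < d)
  (hv₀ : v₀ ∈ Set.Ioo 0 (1 + Real.tanh 2))

/-- sign of the integrand -/
lemma integrand_sign (hd : 0 < d) (hv₀ : v₀ ∈ Set.Ioo 0 (1 + Real.tanh 2)) (s : ℝ) :
    (xInf d v₀ < s → 0 < V (s / d) - v₀) ∧ (s < xInf d v₀ → V (s / d) - v₀ < 0) := by
  set u := v₀ + Real.tanh (-2) with hu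
  have hmem := tanh_mem 2
  have htn : Real.tanh (-2) = -Real.tanh 2 := by
    simp [Real.tanh_neg]
  have hu1 : -1 < u := by
    have h1 : -1 < Real.tanh (-2) := (tanh_mem (-2)).1
    have := hv₀.1; simp only [hu]; linarith
  have hu2 : u < 1 := by
    have := hv₀.2; simp only [hu, htn]; linarith
  have hta : Real.tanh (_root_.artanh u) = u := tanh_artanh hu1 hu2
  have key : ∀ s : ℝ, V (s / d) - v₀ = Real.tanh (s / d - 2) - Real.tanh (_root_.artanh u) := by
    intro s; rw [hta]; simp only [V, hu]; ring
  constructor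
  · intro hs
    rw [key]
    have hx : xInf d v₀ = (2 + _root_.artanh u) * d := by rw [xInf]; ring
    have : _root_.artanh u < s / d - 2 := by
      have : 2 + _root_.artanh u < s / d := by
        rw [lt_div_iff₀ hd]; linarith
      linarith
    have := tanh_strictMono this
    linarith
  · intro hs
    rw [key]
    have hx : xInf d v₀ = (2 + _root_.artanh u) * d := by rw [xInf]; ring
    have : s / d - 2 < _root_.artanh u := by
      have : s / d < 2 + _root_.artanh u := by
        rw [div_lt_iff₀ hd]; linarith
      linarith
    have := tanh_strictMono this
    linarith

lemma continuous_integrand (hd : 0 < d) :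
    Continuous (fun s : ℝ => V (s / d) - v₀) := by
  have : Continuous fun s : ℝ => V (s / d) := by
    unfold V
    exact ((continuous_tanh'.comp ((continuous_id.div_const d).sub continuous_const))).sub
      continuous_const
  exact this.sub continuous_const

lemma hasDerivAt_P (hd : 0 < d) (x : ℝ) :
    HasDerivAt (P α d v₀) (α * (V (x / d) - v₀)) x := by
  have h := ((continuous_integrand (v₀ := v₀) hd).integral_hasStrictDerivAt
    (xInf d v₀) x).hasDerivAt
  exact h.const_mul α

lemma P_xInf : P α d v₀ (xInf d v₀) = 0 := by
  simp [P]

lemma P_strictMonoOn (hα : 0 < α) (hd : 0 < d) (hv₀ : v₀ ∈ Set.Ioo 0 (1 + Real.tanh 2)) :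
    StrictMonoOn (P α d v₀) (Set.Ici (xInf d v₀)) := by
  apply strictMonoOn_of_deriv_pos (convex_Ici _)
  · exact fun z _ => ((hasDerivAt_P (α := α) (v₀ := v₀) hd z).continuousAt).continuousWithinAt
  · intro z hz
    rw [interior_Ici] at hz
    rw [(hasDerivAt_P (α := α) (v₀ := v₀) hd z).deriv]
    have := (integrand_sign hd hv₀ z).1 hz
    positivity

lemma P_antitoneOn (hα : 0 < α) (hd : 0 < d) (hv₀ : v₀ ∈ Set.Ioo 0 (1 + Real.tanh 2)) :
    AntitoneOn (P α d v₀) (Set.Iic (xInf d v₀)) := by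
  apply antitoneOn_of_deriv_nonpos (convex_Iic _)
  · exact fun z _ => ((hasDerivAt_P (α := α) (v₀ := v₀) hd z).continuousAt).continuousWithinAt
  · exact fun z _ => ((hasDerivAt_P (α := α) (v₀ := v₀) hd z).differentiableAt).differentiableWithinAt
  · intro z hz
    rw [interior_Iic] at hz
    rw [(hasDerivAt_P (α := α) (v₀ := v₀) hd z).deriv]
    have := (integrand_sign hd hv₀ z).2 hz
    nlinarith

lemma P_nonneg (hα : 0 < α) (hd : 0 < d) (hv₀ : v₀ ∈ Set.Ioo 0 (1 + Real.tanh 2)) (x : ℝ) :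
    0 ≤ P α d v₀ x := by
  rcases le_or_gt x (xInf d v₀) with h | h
  · have := P_antitoneOn hα hd hv₀ h (le_refl (xInf d v₀) : xInf d v₀ ∈ Set.Iic _) h
    rw [P_xInf] at this
    exact this
  · have := P_strictMonoOn hα hd hv₀ (le_refl (xInf d v₀) : xInf d v₀ ∈ Set.Ici _) h.le h
    rw [P_xInf] at this
    exact this.le

end Pot

/-- the solution stays in the compact box `(0, x̄] × [-ȳ, ȳ]` for all
`t ∈ [0, 𝒯)`, where `h∘ = H(x∘,y∘)`, `ȳ = √(2(h∘+1))`, and `x̄` is the unique point of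
`(x_∞, ∞)` with `P(x̄) = h∘ + 1`. -/
theorem solution_in_box (α β d v₀ : ℝ) (hα : 0 < α) (hβ : 0 < β) (hd : 0 < d)
    (hv₀ : v₀ ∈ Set.Ioo 0 (1 + Real.tanh 2))
    (x y : ℝ → ℝ) (T : EReal) (hT : 0 < T)
    (x₀ y₀ : ℝ) (hx₀ : 0 < x₀) (hinit : x 0 = x₀ ∧ y 0 = y₀)
    (hsol : IsSol α β d v₀ x y T) (hmax : IsMaximal α β d v₀ x y T)
    (h₀ : ℝ) (hh₀ : h₀ = H α d v₀ x₀ y₀)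
    (ybar : ℝ) (hybar : ybar = Real.sqrt (2 * (h₀ + 1)))
    (xbar : ℝ) (hxbar : xbar ∈ Set.Ioi (xInf d v₀) ∧ P α d v₀ xbar = h₀ + 1) :
    ∀ t : ℝ, 0 ≤ t → (t : EReal) < T →
      (x t, y t) ∈ Set.Ioc 0 xbar ×ˢ Set.Icc (-ybar) ybar := by
  intro t ht htT
  -- the energy function along the trajectory
  set g : ℝ → ℝ := fun s => H α d v₀ (x s) (y s) with hg
  -- every s in [0,t] is an admissible time
  have hadm : ∀ s : ℝ, s ∈ Set.Icc 0 t → 0 ≤ s ∧ (s : EReal) < T := by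
    intro s hs
    refine ⟨hs.1, lt_of_le_of_lt ?_ htT⟩
    exact_mod_cast EReal.coe_le_coe_iff.2 hs.2
  -- derivative of g along the trajectory
  have hderiv : ∀ s : ℝ, 0 ≤ s → (s : EReal) < T →
      HasDerivAt g (-α * (y s) ^ 2 - β * (y s) ^ 2 / (x s) ^ 2) s := by
    intro s hs hsT
    obtain ⟨hxpos, hx', hy'⟩ := hsol s hs hsT
    have h1 : HasDerivAt (fun u => (y u) ^ 2 / 2)
        (2 * y s ^ 1 * (-α * (V (x s / d) - v₀ + y s) - β * y s / (x s) ^ 2) / 2) s :=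
      (hy'.pow 2).div_const 2
    have h2 : HasDerivAt (fun u => P α d v₀ (x u)) (α * (V (x s / d) - v₀) * y s) s :=
      (hasDerivAt_P (α := α) (v₀ := v₀) hd (x s)).comp s hx'
    have h3 := h1.add h2
    have heq : 2 * y s ^ 1 * (-α * (V (x s / d) - v₀ + y s) - β * y s / (x s) ^ 2) / 2
        + α * (V (x s / d) - v₀) * y s
        = -α * (y s) ^ 2 - β * (y s) ^ 2 / (x s) ^ 2 := by
      have hx2 : (x s) ^ 2 ≠ 0 := pow_ne_zero 2 hxpos.ne'
      field_simp
      ring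
    rw [heq] at h3
    exact h3
  -- g is antitone on [0,t]
  have hanti : AntitoneOn g (Set.Icc 0 t) := by
    apply antitoneOn_of_deriv_nonpos (convex_Icc 0 t)
    · intro s hs
      obtain ⟨hs0, hsT⟩ := hadm s hs
      exact ((hderiv s hs0 hsT).continuousAt).continuousWithinAt
    · intro s hs
      rw [interior_Icc] at hs
      obtain ⟨hs0, hsT⟩ := hadm s ⟨hs.1.le, hs.2.le⟩
      exact ((hderiv s hs0 hsT).differentiableAt).differentiableWithinAt
    · intro s hs
      rw [interior_Icc] at hs
      obtain ⟨hs0, hsT⟩ := hadm s ⟨hs.1.le, hs.2.le⟩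
      rw [(hderiv s hs0 hsT).deriv]
      have hxpos := (hsol s hs0 hsT).1
      have h1 : 0 ≤ α * (y s) ^ 2 := by positivity
      have h2 : 0 ≤ β * (y s) ^ 2 / (x s) ^ 2 := by positivity
      linarith
  have hg0 : g 0 = h₀ := by
    simp only [hg, hinit.1, hinit.2, hh₀]
  have hgt : g t ≤ h₀ := by
    rw [← hg0]
    exact hanti (Set.left_mem_Icc.2 ht) (Set.right_mem_Icc.2 ht) ht
  -- facts
  have hxpos := (hsol t ht htT).1
  have hPx : 0 ≤ P α d v₀ (x t) := P_nonneg hα hd hv₀ (x t)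
  have hgdef : g t = (y t) ^ 2 / 2 + P α d v₀ (x t) := rfl
  have hh₀nn : 0 ≤ h₀ := by
    have : 0 ≤ P α d v₀ x₀ := P_nonneg hα hd hv₀ x₀
    rw [hh₀]; unfold H; positivity
  -- y bound
  have hy2 : (y t) ^ 2 ≤ 2 * (h₀ + 1) := by nlinarith
  have hybound : |y t| ≤ ybar := by
    rw [hybar, ← Real.sqrt_sq_eq_abs]
    exact Real.sqrt_le_sqrt hy2
  have hyb := abs_le.1 hybound
  -- x bound
  have hxle : x t ≤ xbar := by
    by_contra hcon
    push_neg at hcon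
    have hxbar_mem : xbar ∈ Set.Ici (xInf d v₀) := (Set.mem_Ioi.1 hxbar.1).le
    have hxt_mem : x t ∈ Set.Ici (xInf d v₀) := le_trans hxbar_mem hcon.le
    have := P_strictMonoOn hα hd hv₀ hxbar_mem hxt_mem hcon
    rw [hxbar.2] at this
    nlinarith
  exact ⟨⟨hxpos, hxle⟩, hyb.1, hyb.2⟩
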